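/- Let b, c > 0, let n ≥ 1 be an integer, let l₁,…,lₙ be real constants with |lᵢ| ≤ c for all i, and let z₁,…,zₙ be independent real random variables each distributed according to the Laplace distribution with scale 1/b. Set x̄ = Σ_{i=1}^n lᵢ·zᵢ. Then for every t ≥ 0: if t ≤ n·c/b then P[x̄ ≥ t] ≤ exp(−t²·b²/(8·n·c²)), and for every t ≥ 0 one also has P[x̄ ≥ t] ≤ exp(n/2 − b·t/(2c)). -/

import Mathlib

open MeasureTheory ProbabilityTheory Real Set
open scoped ENNReal NNReal

/-- The Laplace distribution on `ℝ` with scale `1/b` (for `b > 0`): the measure with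
density `x ↦ (b/2) * exp (-b * |x|)` with respect to Lebesgue measure. -/
noncomputable def laplaceMeasure (b : ℝ) : Measure ℝ :=
  MeasureTheory.volume.withDensity
    (fun x => ENNReal.ofReal ((b / 2) * Real.exp (-b * |x|)))

lemma integral_exp_neg_mul_Ioi_zero {a : ℝ} (ha : 0 < a) :
    ∫ x in Ioi (0:ℝ), Real.exp (-a * x) = 1 / a := by
  have hderiv : ∀ x ∈ Ici (0:ℝ),
      HasDerivAt (fun x => -Real.exp (-a * x) / a) (Real.exp (-a * x)) x := by
    intro x _
    have h1 : HasDerivAt (fun x : ℝ => -a * x) (-a * 1) x := (hasDerivAt_id x).const_mul (-a)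
    have h2 := (h1.exp.neg.div_const a)
    refine h2.congr_deriv ?_
    rw [mul_one, mul_neg, neg_neg, mul_div_assoc, div_self ha.ne', mul_one]
  have htend : Filter.Tendsto (fun x => -Real.exp (-a * x) / a) Filter.atTop (nhds 0) := by
    have h0 : Filter.Tendsto (fun x : ℝ => a * x) Filter.atTop Filter.atTop :=
      Filter.Tendsto.const_mul_atTop ha Filter.tendsto_id
    have h1 : Filter.Tendsto (fun x : ℝ => Real.exp (-a * x)) Filter.atTop (nhds 0) := by
      have h2 := Real.tendsto_exp_neg_atTop_nhds_zero.comp h0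
      have h3 : ((fun x => Real.exp (-x)) ∘ fun x => a * x) = fun x : ℝ => Real.exp (-a * x) := by
        funext x; simp [Function.comp, neg_mul]
      rwa [h3] at h2
    have := (h1.neg).div_const a
    simpa using this
  have h := integral_Ioi_of_hasDerivAt_of_tendsto' hderiv (exp_neg_integrableOn_Ioi 0 ha) htend
  rw [h]
  simp [Real.exp_zero]
  ring

lemma laplace_integral_exp {b : ℝ} (hb : 0 < b) {s : ℝ} (hs : |s| < b) :
    Integrable (fun x => Real.exp (s * x)) (laplaceMeasure b) ∧
    ∫ x, Real.exp (s * x) ∂(laplaceMeasure b) = b ^ 2 / (b ^ 2 - s ^ 2) := by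
  obtain ⟨hs1, hs2⟩ := abs_lt.mp hs
  have hbs1 : 0 < b - s := by linarith
  have hbs2 : 0 < b + s := by linarith
  set d : ℝ → ℝ := fun x => (b / 2) * Real.exp (-b * |x|) with hd
  have hd_nn : ∀ x, 0 ≤ d x := fun x => by positivity
  have hd_meas : Measurable d := by
    apply Measurable.const_mul
    exact (measurable_abs.const_mul (-b)).exp
  set F : ℝ → ℝ := fun x => d x * Real.exp (s * x) with hF
  have hF_Ioi : IntegrableOn F (Ioi 0) := by
    have h1 : IntegrableOn (fun x => (b / 2) * Real.exp (-(b - s) * x)) (Ioi 0) :=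
      (exp_neg_integrableOn_Ioi 0 hbs1).const_mul _
    apply h1.congr
    filter_upwards [ae_restrict_mem measurableSet_Ioi] with x hx
    simp only [F, d, abs_of_pos (mem_Ioi.mp hx)]
    rw [show -(b - s) * x = -b * x + s * x by ring, Real.exp_add]
    ring
  have hFn_Ioi : IntegrableOn (fun x => F (-x)) (Ioi 0) := by
    have h1 : IntegrableOn (fun x => (b / 2) * Real.exp (-(b + s) * x)) (Ioi 0) :=
      (exp_neg_integrableOn_Ioi 0 hbs2).const_mul _
    apply h1.congr
    filter_upwards [ae_restrict_mem measurableSet_Ioi] with x hx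
    simp only [F, d, abs_neg, abs_of_pos (mem_Ioi.mp hx)]
    rw [show -(b + s) * x = -b * x + s * (-x) by ring, Real.exp_add]
    ring
  have hF_Iio : IntegrableOn F (Iio 0) := by
    rw [← (Measure.measurePreserving_neg (volume : Measure ℝ)).integrableOn_comp_preimage
        (Homeomorph.neg ℝ).measurableEmbedding]
    simp only [Function.comp_def, neg_preimage, neg_Iio, neg_zero]
    apply hFn_Ioi.congr
    filter_upwards [] with x
    simp
  have hF_Iic : IntegrableOn F (Iic 0) := (integrableOn_Iic_iff_integrableOn_Iio).mpr hF_Iio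
  have hFint : Integrable F := by
    rw [← integrableOn_univ, ← Iic_union_Ioi (a := (0:ℝ)), integrableOn_union]
    exact ⟨hF_Iic, hF_Ioi⟩
  have hIoi_val : ∫ x in Ioi (0:ℝ), F x = (b / 2) * (1 / (b - s)) := by
    rw [setIntegral_congr_fun measurableSet_Ioi
        (g := fun x => (b / 2) * Real.exp (-(b - s) * x)) ?_]
    · rw [MeasureTheory.integral_const_mul, integral_exp_neg_mul_Ioi_zero hbs1]
    · intro x hx
      simp only [F, d, abs_of_pos (mem_Ioi.mp hx)]
      rw [show -(b - s) * x = -b * x + s * x by ring, Real.exp_add]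
      ring
  have hIic_val : ∫ x in Iic (0:ℝ), F x = (b / 2) * (1 / (b + s)) := by
    have hcomp := integral_comp_neg_Iic (0:ℝ) (fun x => F (-x))
    simp only [neg_neg, neg_zero] at hcomp
    rw [hcomp]
    rw [setIntegral_congr_fun measurableSet_Ioi
        (g := fun x => (b / 2) * Real.exp (-(b + s) * x)) ?_]
    · rw [MeasureTheory.integral_const_mul, integral_exp_neg_mul_Ioi_zero hbs2]
    · intro x hx
      simp only [F, d, abs_neg, abs_of_pos (mem_Ioi.mp hx)]
      rw [show -(b + s) * x = -b * x + s * (-x) by ring, Real.exp_add]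
      ring
  have hFval : ∫ x, F x = b ^ 2 / (b ^ 2 - s ^ 2) := by
    rw [← intervalIntegral.integral_Iic_add_Ioi hF_Iic hF_Ioi, hIic_val, hIoi_val]
    have h2 : b + s ≠ 0 := hbs2.ne'
    have h3 : b - s ≠ 0 := hbs1.ne'
    have h4 : b ^ 2 - s ^ 2 ≠ 0 := by
      intro h; apply h3; nlinarith [mul_pos hbs2 hbs1]
    field_simp
    ring
  have hmeas' : Measurable (fun x => (d x).toNNReal) := hd_meas.real_toNNReal
  have hlap : laplaceMeasure b = volume.withDensity (fun x => ((d x).toNNReal : ℝ≥0∞)) := rfl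
  have hsmul : (fun x => (d x).toNNReal • Real.exp (s * x)) = F := by
    funext x
    simp only [NNReal.smul_def, Real.coe_toNNReal _ (hd_nn x), smul_eq_mul, F]
  constructor
  · rw [hlap, integrable_withDensity_iff_integrable_smul hmeas', hsmul]
    exact hFint
  · rw [hlap, integral_withDensity_eq_integral_smul hmeas', hsmul, hFval]

lemma chernoff_aux {Ω : Type*} [MeasurableSpace Ω] (μ : Measure Ω) [IsProbabilityMeasure μ]
    (b c : ℝ) (hb : 0 < b) (hc : 0 < c) (n : ℕ)
    (l : Fin n → ℝ) (hl : ∀ i, |l i| ≤ c)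
    (z : Fin n → Ω → ℝ) (hz_meas : ∀ i, Measurable (z i))
    (hz_indep : iIndepFun z μ)
    (hz_law : ∀ i, Measure.map (z i) μ = laplaceMeasure b)
    (t s : ℝ) (hs : 0 ≤ s) (hsc : s * c < b) :
    (μ {ω | t ≤ ∑ i, l i * z i ω}).toReal ≤
      Real.exp (-s * t) * (b ^ 2 / (b ^ 2 - s ^ 2 * c ^ 2)) ^ n := by
  set X : Fin n → Ω → ℝ := fun i ω => l i * z i ω with hX
  have hX_meas : ∀ i, Measurable (X i) := fun i => (hz_meas i).const_mul (l i)
  have hX_indep : iIndepFun X μ :=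
    hz_indep.comp (fun i x => l i * x) (fun i => measurable_const_mul _)
  have hsl : ∀ i, |s * l i| < b := fun i => by
    rw [abs_mul, abs_of_nonneg hs]
    calc s * |l i| ≤ s * c := by
          exact mul_le_mul_of_nonneg_left (hl i) hs
    _ < b := hsc
  have hg_meas : ∀ i, AEStronglyMeasurable (fun x => Real.exp (s * l i * x))
      (Measure.map (z i) μ) :=
    fun i => (Real.continuous_exp.comp (continuous_const.mul continuous_id)).aestronglyMeasurable
  have h_int : ∀ i, Integrable (fun ω => Real.exp (s * X i ω)) μ := by
    intro i
    have h0 := (laplace_integral_exp hb (hsl i)).1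
    rw [← hz_law i, integrable_map_measure (hg_meas i) (hz_meas i).aemeasurable] at h0
    simpa [Function.comp_def, X, mul_assoc] using h0
  have h_mgf : ∀ i, mgf (X i) μ s = b ^ 2 / (b ^ 2 - (s * l i) ^ 2) := by
    intro i
    have h0 := (laplace_integral_exp hb (hsl i)).2
    rw [← hz_law i, integral_map (hz_meas i).aemeasurable (hg_meas i)] at h0
    have hfun : (fun ω => Real.exp (s * X i ω)) = fun ω => Real.exp (s * l i * z i ω) := by
      funext ω; rw [mul_assoc]
    rw [mgf, hfun]
    exact h0
  have hD2 : 0 < b ^ 2 - s ^ 2 * c ^ 2 := by nlinarith [mul_nonneg hs hc.le]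
  have h_mgf_le : ∀ i, mgf (X i) μ s ≤ b ^ 2 / (b ^ 2 - s ^ 2 * c ^ 2) := by
    intro i
    rw [h_mgf i]
    have h1 : (l i) ^ 2 ≤ c ^ 2 := by nlinarith [sq_abs (l i), hl i, abs_nonneg (l i)]
    have h2 : (s * l i) ^ 2 ≤ s ^ 2 * c ^ 2 := by nlinarith [sq_nonneg s]
    gcongr
  have h_int_sum : Integrable (fun ω => Real.exp (s * (∑ i, X i) ω)) μ :=
    hX_indep.integrable_exp_mul_sum hX_meas (fun i _ => h_int i)
  have hset : {ω | t ≤ ∑ i, l i * z i ω} = {ω | t ≤ (∑ i, X i) ω} := by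
    ext ω
    simp [X, Finset.sum_apply]
  rw [hset]
  calc (μ {ω | t ≤ (∑ i, X i) ω}).toReal
      ≤ Real.exp (-s * t) * mgf (∑ i, X i) μ s :=
        measure_ge_le_exp_mul_mgf t hs h_int_sum
    _ ≤ Real.exp (-s * t) * (b ^ 2 / (b ^ 2 - s ^ 2 * c ^ 2)) ^ n := by
        apply mul_le_mul_of_nonneg_left _ (Real.exp_pos _).le
        rw [hX_indep.mgf_sum hX_meas Finset.univ]
        calc ∏ i, mgf (X i) μ s
            ≤ ∏ _i : Fin n, b ^ 2 / (b ^ 2 - s ^ 2 * c ^ 2) :=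
              Finset.prod_le_prod (fun i _ => mgf_nonneg) (fun i _ => h_mgf_le i)
          _ = (b ^ 2 / (b ^ 2 - s ^ 2 * c ^ 2)) ^ n := by
              rw [Finset.prod_const, Finset.card_univ, Fintype.card_fin]

/-- **Concentration of weighted sums of Laplace random variables** (Lemma 5):
if `z₁, …, zₙ` are independent `Lap(1/b)` random variables and `|lᵢ| ≤ c`, then
`x̄ = Σᵢ lᵢ zᵢ` satisfies `P[x̄ ≥ t] ≤ exp(−t²b²/(8nc²))` whenever `0 ≤ t ≤ nc/b`,
and `P[x̄ ≥ t] ≤ exp(n/2 − bt/(2c))` for every `t ≥ 0`. -/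
theorem laplace_weighted_sum_concentration
    {Ω : Type*} [MeasurableSpace Ω] (μ : Measure Ω) [IsProbabilityMeasure μ]
    (b c : ℝ) (hb : 0 < b) (hc : 0 < c)
    (n : ℕ) (hn : 1 ≤ n)
    (l : Fin n → ℝ) (hl : ∀ i, |l i| ≤ c)
    (z : Fin n → Ω → ℝ)
    (hz_meas : ∀ i, Measurable (z i))
    (hz_indep : iIndepFun z μ)
    (hz_law : ∀ i, Measure.map (z i) μ = laplaceMeasure b)
    (t : ℝ) (ht : 0 ≤ t) :
    (t ≤ n * c / b →
        μ {ω | t ≤ ∑ i, l i * z i ω} ≤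
          ENNReal.ofReal (Real.exp (-(t ^ 2 * b ^ 2) / (8 * n * c ^ 2)))) ∧
      μ {ω | t ≤ ∑ i, l i * z i ω} ≤
        ENNReal.ofReal (Real.exp (n / 2 - b * t / (2 * c))) := by
  have hn' : (0:ℝ) < n := by exact_mod_cast Nat.lt_of_lt_of_le Nat.zero_lt_one hn
  have hb2 : (0:ℝ) < b ^ 2 := by positivity
  have hratio : ∀ x : ℝ, 0 ≤ x → x ≤ 1 / 2 → 1 / (1 - x) ≤ Real.exp (2 * x) := by
    intro x h0 h2
    have h1 : 0 < 1 - x := by linarith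
    rw [div_le_iff₀ h1]
    nlinarith [Real.add_one_le_exp (2 * x)]
  have hmain : ∀ s : ℝ, 0 ≤ s → s * c < b → s ^ 2 * c ^ 2 / b ^ 2 ≤ 1 / 2 →
      μ {ω | t ≤ ∑ i, l i * z i ω} ≤
        ENNReal.ofReal (Real.exp (-s * t + 2 * n * (s ^ 2 * c ^ 2 / b ^ 2))) := by
    intro s hs hsc hhalf
    have key := chernoff_aux μ b c hb hc n l hl z hz_meas hz_indep hz_law t s hs hsc
    have hx0 : 0 ≤ s ^ 2 * c ^ 2 / b ^ 2 := by positivity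
    have hD2 : 0 < b ^ 2 - s ^ 2 * c ^ 2 := by
      have := (div_le_iff₀ hb2).mp hhalf
      nlinarith
    have heq : b ^ 2 / (b ^ 2 - s ^ 2 * c ^ 2) = 1 / (1 - s ^ 2 * c ^ 2 / b ^ 2) := by
      have h1x : 1 - s ^ 2 * c ^ 2 / b ^ 2 = (b ^ 2 - s ^ 2 * c ^ 2) / b ^ 2 := by
        field_simp
      rw [h1x, one_div_div]
    have hpow : (b ^ 2 / (b ^ 2 - s ^ 2 * c ^ 2)) ^ n ≤
        Real.exp (2 * n * (s ^ 2 * c ^ 2 / b ^ 2)) := by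
      rw [heq]
      have hbase : 0 ≤ 1 / (1 - s ^ 2 * c ^ 2 / b ^ 2) := by
        apply div_nonneg zero_le_one
        rw [sub_nonneg, div_le_one hb2]; nlinarith
      calc (1 / (1 - s ^ 2 * c ^ 2 / b ^ 2)) ^ n
          ≤ (Real.exp (2 * (s ^ 2 * c ^ 2 / b ^ 2))) ^ n :=
            pow_le_pow_left₀ hbase (hratio _ hx0 hhalf) n
        _ = Real.exp (2 * n * (s ^ 2 * c ^ 2 / b ^ 2)) := by
            rw [← Real.exp_nat_mul]; ring_nf
    calc μ {ω | t ≤ ∑ i, l i * z i ω}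
        = ENNReal.ofReal ((μ {ω | t ≤ ∑ i, l i * z i ω}).toReal) :=
          (ENNReal.ofReal_toReal (measure_ne_top μ _)).symm
      _ ≤ ENNReal.ofReal (Real.exp (-s * t + 2 * n * (s ^ 2 * c ^ 2 / b ^ 2))) := by
          apply ENNReal.ofReal_le_ofReal
          calc (μ {ω | t ≤ ∑ i, l i * z i ω}).toReal
              ≤ Real.exp (-s * t) * (b ^ 2 / (b ^ 2 - s ^ 2 * c ^ 2)) ^ n := key
            _ ≤ Real.exp (-s * t) * Real.exp (2 * n * (s ^ 2 * c ^ 2 / b ^ 2)) :=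
                mul_le_mul_of_nonneg_left hpow (Real.exp_pos _).le
            _ = Real.exp (-s * t + 2 * n * (s ^ 2 * c ^ 2 / b ^ 2)) := (Real.exp_add _ _).symm
  constructor
  · intro htle
    have htb : t * b ≤ n * c := (le_div_iff₀ hb).mp htle
    set s : ℝ := t * b ^ 2 / (4 * n * c ^ 2) with hsdef
    have hs : 0 ≤ s := by positivity
    have hscle : s * c ≤ b / 4 := by
      rw [hsdef, div_mul_eq_mul_div, div_le_div_iff₀ (by positivity) (by norm_num : (0:ℝ) < 4)]
      nlinarith [mul_le_mul_of_nonneg_right htb (mul_nonneg hb.le hc.le)]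
    have hsc : s * c < b := lt_of_le_of_lt hscle (by linarith)
    have hhalf : s ^ 2 * c ^ 2 / b ^ 2 ≤ 1 / 2 := by
      rw [div_le_iff₀ hb2]
      nlinarith [mul_nonneg hs hc.le]
    have h := hmain s hs hsc hhalf
    have hexp : -s * t + 2 * n * (s ^ 2 * c ^ 2 / b ^ 2) = -(t ^ 2 * b ^ 2) / (8 * n * c ^ 2) := by
      rw [hsdef]
      field_simp
      ring
    rwa [hexp] at h
  · set s : ℝ := b / (2 * c) with hsdef
    have hs : 0 ≤ s := by positivity
    have hsc : s * c < b := by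
      rw [hsdef, div_mul_eq_mul_div, div_lt_iff₀ (by positivity)]
      nlinarith
    have hq : s ^ 2 * c ^ 2 / b ^ 2 = 1 / 4 := by
      rw [hsdef]
      field_simp
      ring
    have hhalf : s ^ 2 * c ^ 2 / b ^ 2 ≤ 1 / 2 := by rw [hq]; norm_num
    have h := hmain s hs hsc hhalf
    have hexp : -s * t + 2 * n * (s ^ 2 * c ^ 2 / b ^ 2) = n / 2 - b * t / (2 * c) := by
      rw [hsdef]
      field_simp
      ring
    rwa [hexp] at h
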